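/- In the dual of the Lie algebra 𝔤_{5,4}, consider the set of points ℓ with coordinates (a, b, c, μ, ν) relative to the basis {A*_ℓ, B*_ℓ, C*, U*, V*} with r = √(μ²+ν²) ≠ 0. Each coadjoint orbit through ℓ_{β,μ,ν} = βB*_ℓ + μU* + νV* equals {a A*_ℓ + (β + c²/(2r)) B*_ℓ + c C* + μU* + νV* : a, c ∈ ℝ}. Consequently the function Q(a A*_ℓ + b B*_ℓ + c C* + μU* + νV*) = 2br − c² is constant on each such orbit (with value 2βr). -/

import Mathlib

/-- `ℝ⁵` with coordinates `(a, b, c, u, v)` (or dual coordinates `(α, β, ρ, μ, ν)`). -/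
abbrev R5 : Type := ℝ × ℝ × ℝ × ℝ × ℝ

/-- The coadjoint action of `G_{5,4}`:
`Ad*(a,b,c,u,v)(α,β,ρ,μ,ν) =
  (α − bρ − cμ − μab/2 − νb²/2, β + ρa − νc + νab/2 + μa²/2, ρ + μa + νb, μ, ν)`. -/
noncomputable def ad54 (g ℓ : R5) : R5 :=
  (ℓ.1 - g.2.1 * ℓ.2.2.1 - g.2.2.1 * ℓ.2.2.2.1 - ℓ.2.2.2.1 * g.1 * g.2.1 / 2
      - ℓ.2.2.2.2 * g.2.1 ^ 2 / 2,
   ℓ.2.1 + ℓ.2.2.1 * g.1 - ℓ.2.2.2.2 * g.2.2.1 + ℓ.2.2.2.2 * g.1 * g.2.1 / 2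
      + ℓ.2.2.2.1 * g.1 ^ 2 / 2,
   ℓ.2.2.1 + ℓ.2.2.2.1 * g.1 + ℓ.2.2.2.2 * g.2.1,
   ℓ.2.2.2.1, ℓ.2.2.2.2)

/-- The `G_{5,4}`-invariant `Q(aA*_ℓ + bB*_ℓ + cC* + μU* + νV*) = 2br − c²`,
expressed in the standard dual coordinates `(α,β,ρ,μ,ν)`: since
`br = ℓ(B_ℓ)·r = −να + μβ`, one has `Q(α,β,ρ,μ,ν) = 2(μβ − να) − ρ²`. -/
noncomputable def Q54 (m : R5) : ℝ :=
  2 * (m.2.2.2.1 * m.2.1 - m.2.2.2.2 * m.1) - m.2.2.1 ^ 2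

/-- For `r = √(μ²+ν²) ≠ 0`, the coadjoint orbit of
`ℓ_{β,μ,ν} = βB*_ℓ + μU* + νV*` equals
`{a A*_ℓ + (β + c²/(2r)) B*_ℓ + c C* + μU* + νV* : a, c ∈ ℝ}`, and consequently
`Q` is constant on this orbit, with value `2βr`. -/
theorem stmt10 (β μ ν : ℝ) (h : μ ^ 2 + ν ^ 2 ≠ 0) :
    ∀ r μt νt : ℝ, r = Real.sqrt (μ ^ 2 + ν ^ 2) → μt = μ / r → νt = ν / r →
      ({m : R5 | ∃ g : R5, ad54 g (-νt * β, μt * β, 0, μ, ν) = m}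
          = {m : R5 | ∃ a c : ℝ,
              m = (μt * a - νt * (β + c ^ 2 / (2 * r)),
                   νt * a + μt * (β + c ^ 2 / (2 * r)), c, μ, ν)}) ∧
      ∀ m : R5, (∃ g : R5, ad54 g (-νt * β, μt * β, 0, μ, ν) = m) →
        Q54 m = 2 * β * r := by
  intro r μt νt hr hμt hνt
  have h2 : (0:ℝ) < μ ^ 2 + ν ^ 2 := lt_of_le_of_ne (by positivity) (Ne.symm h)
  have hrpos : 0 < r := hr ▸ Real.sqrt_pos.mpr h2
  have hr0 : r ≠ 0 := ne_of_gt hrpos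
  have hr2 : r ^ 2 = μ ^ 2 + ν ^ 2 := by rw [hr, Real.sq_sqrt h2.le]
  subst hμt hνt
  constructor
  · ext m
    simp only [Set.mem_setOf_eq]
    constructor
    · rintro ⟨⟨a, b, c, u, v⟩, rfl⟩
      refine ⟨(μ / r) * (-(ν / r) * β - b * 0 - c * μ - μ * a * b / 2 - ν * b ^ 2 / 2)
          + (ν / r) * (μ / r * β + 0 * a - ν * c + ν * a * b / 2 + μ * a ^ 2 / 2),
        μ * a + ν * b, ?_⟩
      simp only [ad54, Prod.mk.injEq]
      refine ⟨?_, ?_⟩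
      · field_simp
        linear_combination (-r * (ν * b ^ 2 + 2 * c * μ + μ * a * b)) * hr2
      · field_simp
        refine ⟨?_, by ring, trivial⟩
        linear_combination (r * (μ * a ^ 2 - 2 * ν * c + ν * a * b)) * hr2
    · rintro ⟨a, c, rfl⟩
      refine ⟨(μ * c / r ^ 2, ν * c / r ^ 2, -a / r, 0, 0), ?_⟩
      simp only [ad54, Prod.mk.injEq]
      refine ⟨?_, ?_, ?_⟩
      · field_simp
        linear_combination (ν * c ^ 2) * hr2
      · field_simp
        linear_combination (-μ * c ^ 2) * hr2
      · field_simp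
        refine ⟨?_, trivial⟩
        linear_combination (-c) * hr2
  · rintro m ⟨⟨a, b, c, u, v⟩, rfl⟩
    simp only [ad54, Q54]
    field_simp
    linear_combination (-2 * β) * hr2
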